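/- Let q be a real number with 0 < q < 1 and let c₀, d₀ be real numbers with 0 < c₀ ≤ d₀. Then there exists a real number ν₀ > 0 such that ν₀ q^{2k} ∉ [q c₀, q d₀] for every k ∈ ℤ if and only if d₀ < q^{-2} c₀. -/

import Mathlib

/-- the 'tunnel' phenomenon: there is a positive `ν₀` whose
geometric progression `{ν₀ q^{2k} : k ∈ ℤ}` avoids the closed interval
`[qc₀, qd₀]` if and only if `d₀ < q⁻² c₀`. -/
theorem tunnel_progression_exists_iff
    (q : ℝ) (hq0 : 0 < q) (hq1 : q < 1)
    (c₀ d₀ : ℝ) (hc : 0 < c₀) (hcd : c₀ ≤ d₀) :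
    (∃ ν₀ : ℝ, 0 < ν₀ ∧
        ∀ k : ℤ, ν₀ * q ^ (2 * k) ∉ Set.Icc (q * c₀) (q * d₀)) ↔
      d₀ < q ^ (-2 : ℤ) * c₀ := by
  have hd : 0 < d₀ := lt_of_lt_of_le hc hcd
  set r : ℝ := q ^ 2 with hrdef
  have hr0 : (0:ℝ) < r := by positivity
  have hr1 : r < 1 := by nlinarith
  have hqne : q ≠ 0 := ne_of_gt hq0
  have hzpow : ∀ k : ℤ, q ^ (2 * k) = r ^ k := by
    intro k
    rw [zpow_mul, hrdef]
    norm_cast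
  have hneg2 : q ^ (-2 : ℤ) = r⁻¹ := by
    rw [zpow_neg, hrdef]
    norm_cast
  rw [hneg2]
  constructor
  · rintro ⟨ν₀, hν, h⟩
    by_contra hlt
    push_neg at hlt
    have hc' : c₀ ≤ r * d₀ := by
      rw [inv_mul_le_iff₀ hr0] at hlt
      linarith
    set b := q * d₀ with hbdef
    have hbpos : 0 < b := by positivity
    obtain ⟨n, hn1, hn2⟩ := exists_mem_Ico_zpow (x := ν₀ / b) (y := r⁻¹)
      (by positivity) ((one_lt_inv₀ hr0).2 hr1)
    have hs0 : (0:ℝ) < r ^ (n + 1) := zpow_pos hr0 _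
    have hsn : (0:ℝ) < r ^ n := zpow_pos hr0 _
    have hsucc : r ^ (n + 1) = r ^ n * r := zpow_add_one₀ (ne_of_gt hr0) n
    have hinv1 : (r⁻¹) ^ n = (r ^ n)⁻¹ := by rw [inv_zpow]
    have hinv2 : (r⁻¹) ^ (n + 1) = (r ^ (n + 1))⁻¹ := by rw [inv_zpow]
    rw [hinv1] at hn1
    rw [hinv2] at hn2
    -- hn1 : (r ^ n)⁻¹ ≤ ν₀ / b ; hn2 : ν₀ / b < (r ^ (n+1))⁻¹
    have hub : ν₀ * r ^ (n + 1) < b := by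
      have := (div_lt_iff₀ hbpos).1 hn2
      calc ν₀ * r ^ (n + 1) < ((r ^ (n + 1))⁻¹ * b) * r ^ (n + 1) := by
            apply mul_lt_mul_of_pos_right _ hs0
            linarith
        _ = b := by field_simp
    have hlb : b * r ≤ ν₀ * r ^ (n + 1) := by
      have h1 : b * (r ^ n)⁻¹ ≤ ν₀ := by
        have := (le_div_iff₀ hbpos).1 hn1
        linarith
      calc b * r = (b * (r ^ n)⁻¹) * r ^ (n + 1) := by
            rw [hsucc]; field_simp
        _ ≤ ν₀ * r ^ (n + 1) := mul_le_mul_of_nonneg_right h1 (le_of_lt hs0)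
    have hqc : q * c₀ ≤ b * r := by
      calc q * c₀ ≤ q * (r * d₀) := by nlinarith
        _ = b * r := by rw [hbdef]; ring
    exact h (n + 1) (by rw [hzpow]; exact ⟨le_trans hqc hlb, le_of_lt (lt_of_lt_of_le hub (le_of_eq rfl))⟩)
  · intro hlt
    refine ⟨Real.sqrt (c₀ * d₀), Real.sqrt_pos.2 (by positivity), ?_⟩
    have hs : Real.sqrt (c₀ * d₀) ^ 2 = c₀ * d₀ := Real.sq_sqrt (by positivity)
    set ν₀ := Real.sqrt (c₀ * d₀) with hνdef
    have hν0 : 0 < ν₀ := Real.sqrt_pos.2 (by positivity)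
    have hkey : r * d₀ < c₀ := by
      have := mul_lt_mul_of_pos_left hlt hr0
      rw [← mul_assoc, mul_inv_cancel₀ (ne_of_gt hr0), one_mul] at this
      exact this
    -- ν₀ > q * d₀ : ν₀² = c₀ d₀ > q² d₀² = (q d₀)²
    have hup : q * d₀ < ν₀ := by
      by_contra h'
      push_neg at h'
      have h2 : ν₀ ^ 2 ≤ (q * d₀) ^ 2 := pow_le_pow_left₀ hν0.le h' 2
      have h3 : (q * d₀) ^ 2 = r * d₀ ^ 2 := by rw [hrdef]; ring
      have h4 : r * d₀ * d₀ < c₀ * d₀ := mul_lt_mul_of_pos_right hkey hd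
      rw [hs, h3] at h2
      nlinarith
    have hdown : ν₀ * r < q * c₀ := by
      have hq' : ν₀ * q < c₀ := by
        by_contra h'
        push_neg at h'
        have h2 : c₀ ^ 2 ≤ (ν₀ * q) ^ 2 := pow_le_pow_left₀ hc.le h' 2
        have h3 : (ν₀ * q) ^ 2 = c₀ * d₀ * r := by rw [hrdef, ← hs]; ring
        have h4 : r * d₀ * c₀ < c₀ * c₀ := mul_lt_mul_of_pos_right hkey hc
        rw [h3] at h2
        nlinarith
      calc ν₀ * r = (ν₀ * q) * q := by rw [hrdef]; ring
        _ < c₀ * q := mul_lt_mul_of_pos_right hq' hq0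
        _ = q * c₀ := by ring
    intro k hk
    rw [hzpow] at hk
    obtain ⟨hk1, hk2⟩ := hk
    rcases le_or_gt k 0 with hk0 | hk0
    · have : (1:ℝ) ≤ r ^ k := one_le_zpow_of_nonpos₀ hr0 (le_of_lt hr1) hk0
      have : ν₀ ≤ ν₀ * r ^ k := le_mul_of_one_le_right (le_of_lt hν0) this
      linarith
    · have hk1' : (1:ℤ) ≤ k := hk0
      have : r ^ k ≤ r ^ (1:ℤ) := zpow_le_zpow_right_of_le_one₀ hr0 (le_of_lt hr1) hk1'
      have h2 : ν₀ * r ^ k ≤ ν₀ * r := by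
        have := mul_le_mul_of_nonneg_left this (le_of_lt hν0)
        simpa using this
      linarith
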